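/- Let ξ be a nonnegative integer-valued random variable with P(ξ > k) ~ c/k as k → ∞ for some c > 0, and let ξ^{(n)} = ξ·1{ξ ≤ n·log n} be its truncation. Then E[ξ^{(n)}] ~ c·log n and E[(ξ^{(n)})²] ~ c·n·log n as n → ∞. -/

import Mathlib

open Filter MeasureTheory

open Finset

lemma trunc_aux_integral {Ω : Type*} [MeasurableSpace Ω] (μ : Measure Ω)
    [IsProbabilityMeasure μ] (ξ : Ω → ℕ) (hmeas : Measurable ξ) (w : ℕ → ℝ) (m : ℕ) :
    ∫ ω, (if ξ ω ≤ m then ∑ k ∈ range (ξ ω), w k else 0) ∂μ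
      = ∑ k ∈ range m, w k * ((μ {ω | k < ξ ω}).toReal - (μ {ω | m < ξ ω}).toReal) := by
  have hA : ∀ k : ℕ, MeasurableSet {ω | k < ξ ω ∧ ξ ω ≤ m} := by
    intro k
    have : {ω | k < ξ ω ∧ ξ ω ≤ m} = ξ ⁻¹' {j | k < j ∧ j ≤ m} := rfl
    rw [this]; exact hmeas (by trivial)
  have hpt : ∀ ω, (if ξ ω ≤ m then ∑ k ∈ range (ξ ω), w k else 0)
      = ∑ k ∈ range m, Set.indicator {ω | k < ξ ω ∧ ξ ω ≤ m} (fun _ => w k) ω := by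
    intro ω
    have hind : ∀ k, Set.indicator {ω | k < ξ ω ∧ ξ ω ≤ m} (fun _ => w k) ω
        = if (k < ξ ω ∧ ξ ω ≤ m) then w k else 0 := by
      intro k; simp [Set.indicator_apply, Set.mem_setOf_eq]
    simp_rw [hind]
    by_cases h : ξ ω ≤ m
    · rw [if_pos h]
      rw [← Finset.sum_subset (Finset.range_subset_range.2 h)
        (fun x _ hx => by rw [if_neg]; simp at hx; omega)]
      exact (Finset.sum_congr rfl (fun k hk => by
        rw [if_pos ⟨Finset.mem_range.1 hk, h⟩])).symm
    · rw [if_neg h]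
      exact (Finset.sum_eq_zero (fun k _ => by rw [if_neg (fun hh => h hh.2)])).symm
  have hmeasval : ∀ k < m, (μ {ω | k < ξ ω ∧ ξ ω ≤ m}).toReal
      = (μ {ω | k < ξ ω}).toReal - (μ {ω | m < ξ ω}).toReal := by
    intro k hk
    have hdecomp : {ω | k < ξ ω} = {ω | k < ξ ω ∧ ξ ω ≤ m} ∪ {ω | m < ξ ω} := by
      ext ω; simp only [Set.mem_setOf_eq, Set.mem_union]; omega
    have hdisj : Disjoint {ω | k < ξ ω ∧ ξ ω ≤ m} {ω | m < ξ ω} := by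
      rw [Set.disjoint_left]; intro ω h1 h2
      simp only [Set.mem_setOf_eq] at h1 h2; omega
    have hBmeas : MeasurableSet {ω | m < ξ ω} := hmeas (by trivial)
    have := measure_union (μ := μ) hdisj hBmeas
    rw [← hdecomp] at this
    have h1 := measure_ne_top μ {ω | k < ξ ω ∧ ξ ω ≤ m}
    have h2 := measure_ne_top μ {ω | m < ξ ω}
    rw [this, ENNReal.toReal_add h1 h2]; ring
  calc ∫ ω, (if ξ ω ≤ m then ∑ k ∈ range (ξ ω), w k else 0) ∂μ
      = ∫ ω, ∑ k ∈ range m, Set.indicator {ω | k < ξ ω ∧ ξ ω ≤ m} (fun _ => w k) ω ∂μ := by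
        exact integral_congr_ae (Filter.Eventually.of_forall hpt)
    _ = ∑ k ∈ range m, ∫ ω, Set.indicator {ω | k < ξ ω ∧ ξ ω ≤ m} (fun _ => w k) ω ∂μ := by
        exact integral_finset_sum _ (fun k _ => (integrable_const (w k)).indicator (hA k))
    _ = ∑ k ∈ range m, w k * ((μ {ω | k < ξ ω}).toReal - (μ {ω | m < ξ ω}).toReal) := by
        refine Finset.sum_congr rfl (fun k hk => ?_)
        rw [integral_indicator_const _ (hA k), Measure.real_def, hmeasval k (Finset.mem_range.1 hk)]
        simp [mul_comm]


lemma sum_one_div_ge_log (m : ℕ) :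
    Real.log m ≤ ∑ k ∈ range m, (1 : ℝ) / (k + 1) := by
  have hH : (∑ k ∈ range m, (1 : ℝ) / (k + 1)) = (harmonic m : ℝ) := by
    rw [harmonic]; push_cast
    exact Finset.sum_congr rfl (fun k _ => by rw [one_div])
  rw [hH]
  refine le_trans ?_ (log_add_one_le_harmonic m)
  rcases Nat.eq_zero_or_pos m with h | h
  · simp [h]
  · apply Real.log_le_log (by exact_mod_cast h)
    push_cast; linarith

-- harmonic sum over range m of 1/(k+1), asymptotics vs log
lemma harmonic_div_log_tendsto :
    Tendsto (fun m : ℕ => (∑ k ∈ range m, (1 : ℝ) / (k + 1)) / Real.log m) atTop (nhds 1) := by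
  have hH : ∀ m : ℕ, (∑ k ∈ range m, (1 : ℝ) / (k + 1)) = (harmonic m : ℝ) := by
    intro m
    rw [harmonic]
    push_cast
    exact Finset.sum_congr rfl (fun k _ => by rw [one_div])
  have hlow := sum_one_div_ge_log
  have hhigh : ∀ m : ℕ, (∑ k ∈ range m, (1 : ℝ) / (k + 1)) ≤ 1 + Real.log m := by
    intro m; rw [hH]; exact harmonic_le_one_add_log m
  have hlogtop : Tendsto (fun m : ℕ => Real.log m) atTop atTop :=
    Real.tendsto_log_atTop.comp tendsto_natCast_atTop_atTop
  refine tendsto_of_tendsto_of_tendsto_of_le_of_le'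
    (g := fun _ : ℕ => (1:ℝ)) (h := fun m : ℕ => 1 + 1 / Real.log m)
    tendsto_const_nhds ?_ ?_ ?_
  · have : Tendsto (fun m : ℕ => 1 / Real.log m) atTop (nhds 0) :=
      tendsto_const_nhds.div_atTop hlogtop
    simpa using tendsto_const_nhds.add this
  · filter_upwards [hlogtop.eventually_gt_atTop 0] with m hm
    rw [le_div_iff₀ hm, one_mul]; exact hlow m
  · filter_upwards [hlogtop.eventually_gt_atTop 0] with m hm
    rw [div_le_iff₀ hm, add_mul, one_mul, div_mul_cancel₀ _ hm.ne']
    linarith [hhigh m]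

/-- If `k * b k → c` then `(∑_{k<m} b k) / log m → c`. -/
lemma sum_div_log_tendsto {b : ℕ → ℝ} {c : ℝ}
    (hb : Tendsto (fun k : ℕ => (k : ℝ) * b k) atTop (nhds c)) :
    Tendsto (fun m : ℕ => (∑ k ∈ range m, b k) / Real.log m) atTop (nhds c) := by
  set g : ℕ → ℝ := fun k => 1 / (k + 1) with hg
  have hgpos : ∀ k, (0:ℝ) < g k := fun k => by positivity
  have hlogtop : Tendsto (fun m : ℕ => Real.log m) atTop atTop :=
    Real.tendsto_log_atTop.comp tendsto_natCast_atTop_atTop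
  have hHtop : Tendsto (fun m : ℕ => ∑ k ∈ range m, g k) atTop atTop :=
    tendsto_atTop_mono sum_one_div_ge_log hlogtop
  -- b - c*g is little-o of g
  have hb0 : Tendsto b atTop (nhds 0) := by
    have h1 : Tendsto (fun k : ℕ => ((k:ℝ) * b k) * (1 / k)) atTop (nhds (c * 0)) :=
      hb.mul (tendsto_const_nhds.div_atTop tendsto_natCast_atTop_atTop)
    rw [mul_zero] at h1
    apply h1.congr'
    filter_upwards [eventually_gt_atTop 0] with k hk
    have : (k:ℝ) ≠ 0 := by positivity
    field_simp
  have hratio : Tendsto (fun k : ℕ => (b k - c * g k) / g k) atTop (nhds 0) := by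
    have : ∀ k : ℕ, (b k - c * g k) / g k = (k + 1) * b k - c := by
      intro k
      have h1 : g k ≠ 0 := (hgpos k).ne'
      have hgk : g k * ((k:ℝ) + 1) = 1 := by simp only [hg]; field_simp
      field_simp [hg]
      linear_combination (-b k) * hgk
    rw [show (0:ℝ) = c - c by ring]
    apply Tendsto.congr (fun k => (this k).symm)
    have : Tendsto (fun k : ℕ => ((k:ℝ)) * b k + b k) atTop (nhds (c + 0)) := hb.add hb0
    rw [add_zero] at this
    have h2 : Tendsto (fun k : ℕ => ((k:ℝ) + 1) * b k - c) atTop (nhds (c - c)) := by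
      apply Tendsto.sub _ tendsto_const_nhds
      apply this.congr (fun k => by ring)
    exact h2
  have hlo : (fun k : ℕ => b k - c * g k) =o[atTop] g :=
    (Asymptotics.isLittleO_iff_tendsto (fun k h => absurd h (hgpos k).ne')).2 hratio
  have hsum : (fun m : ℕ => ∑ k ∈ range m, (b k - c * g k)) =o[atTop]
      (fun m : ℕ => ∑ k ∈ range m, g k) :=
    hlo.sum_range (fun k => (hgpos k).le) hHtop
  have hdiv0 : Tendsto (fun m : ℕ => (∑ k ∈ range m, (b k - c * g k)) / (∑ k ∈ range m, g k))
      atTop (nhds 0) := hsum.tendsto_div_nhds_zero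
  -- now assemble
  have hHlog := harmonic_div_log_tendsto
  have key : Tendsto (fun m : ℕ =>
      ((∑ k ∈ range m, (b k - c * g k)) / (∑ k ∈ range m, g k)
        + c) * ((∑ k ∈ range m, g k) / Real.log m)) atTop (nhds ((0 + c) * 1)) :=
    (hdiv0.add tendsto_const_nhds).mul hHlog
  rw [show ((0:ℝ) + c) * 1 = c by ring] at key
  apply key.congr'
  have hHpos : ∀ᶠ m : ℕ in atTop, 0 < ∑ k ∈ range m, g k :=
    hHtop.eventually_gt_atTop 0
  filter_upwards [hHpos] with m hm
  rw [Finset.sum_sub_distrib, ← Finset.mul_sum]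
  field_simp
  ring


lemma sum_odd_real (j : ℕ) : ∑ k ∈ range j, (2 * (k:ℝ) + 1) = (j:ℝ)^2 := by
  induction j with
  | zero => simp
  | succ n ih => rw [Finset.sum_range_succ, ih]; push_cast; ring

-- floor asymptotics
lemma floor_div_tendsto {x : ℕ → ℝ} (hx : Tendsto x atTop atTop) :
    Tendsto (fun n => (⌊x n⌋₊ : ℝ) / x n) atTop (nhds 1) := by
  refine tendsto_of_tendsto_of_tendsto_of_le_of_le'
    (g := fun n => 1 - 1 / x n) (h := fun _ => (1:ℝ)) ?_ tendsto_const_nhds ?_ ?_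
  · have : Tendsto (fun n => 1 / x n) atTop (nhds 0) := tendsto_const_nhds.div_atTop hx
    simpa using tendsto_const_nhds.sub this
  · filter_upwards [hx.eventually_ge_atTop 1] with n hn
    have hpos : 0 < x n := lt_of_lt_of_le one_pos hn
    rw [sub_le_iff_le_add, ← add_div, le_div_iff₀ hpos]
    have := Nat.sub_one_lt_floor (x n)
    nlinarith [this]
  · filter_upwards [hx.eventually_ge_atTop 1] with n hn
    have hpos : 0 < x n := lt_of_lt_of_le one_pos hn
    rw [div_le_one hpos]
    exact Nat.floor_le hpos.le

/-- Truncated moments of a nonnegative integer random variable with Cauchy-type tail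
`P(ξ > k) ~ c/k`: the truncation `ξ^{(n)} = ξ·1{ξ ≤ n log n}` satisfies
`E[ξ^{(n)}] ~ c log n` and `E[(ξ^{(n)})²] ~ c n log n`. -/
theorem truncated_moments {Ω : Type*} [MeasurableSpace Ω] (μ : Measure Ω)
    [IsProbabilityMeasure μ] (ξ : Ω → ℕ) (hmeas : Measurable ξ) (c : ℝ) (hc : 0 < c)
    (htail : Tendsto (fun k : ℕ => (k : ℝ) * (μ {ω | k < ξ ω}).toReal) atTop (nhds c)) :
    Tendsto (fun n : ℕ =>
        (∫ ω, (if (ξ ω : ℝ) ≤ n * Real.log n then (ξ ω : ℝ) else 0) ∂μ)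
          / (c * Real.log n)) atTop (nhds 1) ∧
    Tendsto (fun n : ℕ =>
        (∫ ω, (if (ξ ω : ℝ) ≤ n * Real.log n then (ξ ω : ℝ) ^ 2 else 0) ∂μ)
          / (c * n * Real.log n)) atTop (nhds 1) := by
  set p : ℕ → ℝ := fun k => (μ {ω | k < ξ ω}).toReal with hpdef
  set a : ℕ → ℝ := fun k => (k : ℝ) * p k with hadef
  set S : ℕ → ℝ := fun M => ∑ k ∈ range M, p k with hSdef
  set A : ℕ → ℝ := fun M => ∑ k ∈ range M, a k with hAdef
  set m : ℕ → ℕ := fun n => ⌊(n : ℝ) * Real.log n⌋₊ with hmdef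
  have ha : Tendsto a atTop (nhds c) := htail
  have hxnonneg : ∀ n : ℕ, 0 ≤ (n : ℝ) * Real.log n :=
    fun n => mul_nonneg (Nat.cast_nonneg n) (Real.log_natCast_nonneg n)
  have hif : ∀ (n : ℕ) (j : ℕ), ((j : ℝ) ≤ (n : ℝ) * Real.log n) ↔ j ≤ m n :=
    fun n j => (Nat.le_floor_iff (hxnonneg n)).symm
  -- integral formulas
  have hI1 : ∀ n : ℕ, (∫ ω, (if (ξ ω : ℝ) ≤ n * Real.log n then (ξ ω : ℝ) else 0) ∂μ)
      = S (m n) - (m n : ℝ) * p (m n) := by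
    intro n
    have h1 : (∫ ω, (if (ξ ω : ℝ) ≤ n * Real.log n then (ξ ω : ℝ) else 0) ∂μ)
        = ∫ ω, (if ξ ω ≤ m n then ∑ k ∈ range (ξ ω), (1:ℝ) else 0) ∂μ := by
      refine integral_congr_ae (Filter.Eventually.of_forall fun ω => ?_)
      simp only []
      rw [if_congr (hif n (ξ ω)) rfl rfl]
      simp
    rw [h1, trunc_aux_integral μ ξ hmeas _ (m n)]
    simp only [one_mul, Finset.sum_sub_distrib, Finset.sum_const, Finset.card_range,
      nsmul_eq_mul]
    rfl
  have hI2 : ∀ n : ℕ, (∫ ω, (if (ξ ω : ℝ) ≤ n * Real.log n then (ξ ω : ℝ)^2 else 0) ∂μ)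
      = 2 * A (m n) + S (m n) - (m n : ℝ) * a (m n) := by
    intro n
    have h1 : (∫ ω, (if (ξ ω : ℝ) ≤ n * Real.log n then (ξ ω : ℝ)^2 else 0) ∂μ)
        = ∫ ω, (if ξ ω ≤ m n then ∑ k ∈ range (ξ ω), (2*(k:ℝ)+1) else 0) ∂μ := by
      refine integral_congr_ae (Filter.Eventually.of_forall fun ω => ?_)
      simp only []
      rw [if_congr (hif n (ξ ω)) rfl rfl, sum_odd_real]
    rw [h1, trunc_aux_integral μ ξ hmeas _ (m n)]
    have expand : ∀ M : ℕ, (∑ k ∈ range M, (2*(k:ℝ)+1) * (p k - p M))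
        = 2 * A M + S M - (M:ℝ) * a M := by
      intro M
      have e1 : ∀ k : ℕ, (2*(k:ℝ)+1) * (p k - p M) = 2 * a k + p k - (2*(k:ℝ)+1) * p M := by
        intro k; simp only [hadef]; ring
      rw [Finset.sum_congr rfl (fun k _ => e1 k)]
      rw [Finset.sum_sub_distrib, Finset.sum_add_distrib, ← Finset.mul_sum,
        ← Finset.sum_mul, sum_odd_real]
      simp only [hadef, hAdef, hSdef]
      ring
    exact expand (m n)
  -- basic limits
  have hLtop : Tendsto (fun n : ℕ => Real.log n) atTop atTop :=
    Real.tendsto_log_atTop.comp tendsto_natCast_atTop_atTop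
  have hlog1 : ∀ᶠ n : ℕ in atTop, 1 ≤ Real.log n := hLtop.eventually_ge_atTop 1
  have hnlen : ∀ᶠ n : ℕ in atTop, (n:ℝ) ≤ (n:ℝ) * Real.log n := by
    filter_upwards [hlog1] with n hn
    nlinarith [Nat.cast_nonneg (α := ℝ) n]
  have hxtop : Tendsto (fun n : ℕ => (n : ℝ) * Real.log n) atTop atTop :=
    tendsto_atTop_mono' atTop hnlen tendsto_natCast_atTop_atTop
  have hmge : ∀ᶠ n : ℕ in atTop, n ≤ m n := by
    filter_upwards [hnlen] with n hn
    exact Nat.le_floor hn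
  have hmtop : Tendsto m atTop atTop := by
    refine tendsto_atTop_mono' atTop hmge tendsto_id
  have hmx : Tendsto (fun n : ℕ => (m n : ℝ) / ((n:ℝ) * Real.log n)) atTop (nhds 1) :=
    floor_div_tendsto hxtop
  -- log (m n) / log n → 1
  have hloglog : Tendsto (fun n : ℕ => Real.log (Real.log n) / Real.log n) atTop (nhds 0) :=
    (Real.isLittleO_log_id_atTop.tendsto_div_nhds_zero).comp hLtop
  have hlogm : Tendsto (fun n : ℕ => Real.log (m n) / Real.log n) atTop (nhds 1) := by
    refine tendsto_of_tendsto_of_tendsto_of_le_of_le'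
      (g := fun _ : ℕ => (1:ℝ)) (h := fun n : ℕ => 1 + Real.log (Real.log n) / Real.log n)
      tendsto_const_nhds ?_ ?_ ?_
    · simpa using tendsto_const_nhds.add hloglog
    · filter_upwards [hmge, hlog1, eventually_ge_atTop 1] with n h1 h2 h3
      rw [le_div_iff₀ (lt_of_lt_of_le one_pos h2), one_mul]
      refine Real.log_le_log (by positivity) ?_
      exact_mod_cast h1
    · filter_upwards [hmge, hlog1, eventually_ge_atTop 1] with n h1 h2 h3
      have hnpos : (0:ℝ) < n := by exact_mod_cast h3
      have hLpos : (0:ℝ) < Real.log n := lt_of_lt_of_le one_pos h2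
      have hmpos : (0:ℝ) < (m n : ℝ) := by
        have : 1 ≤ m n := le_trans h3 h1
        exact_mod_cast this
      rw [div_le_iff₀ hLpos, add_mul, one_mul, div_mul_cancel₀ _ hLpos.ne']
      have step : Real.log (m n) ≤ Real.log ((n:ℝ) * Real.log n) :=
        Real.log_le_log hmpos (Nat.floor_le (hxnonneg n))
      rw [Real.log_mul hnpos.ne' hLpos.ne'] at step
      linarith
  -- composed limits
  have hSm : Tendsto (fun n : ℕ => S (m n) / Real.log (m n)) atTop (nhds c) :=
    (sum_div_log_tendsto ha).comp hmtop
  have ham : Tendsto (fun n : ℕ => a (m n)) atTop (nhds c) := ha.comp hmtop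
  have hAm : Tendsto (fun n : ℕ => A (m n) / (m n : ℝ)) atTop (nhds c) := by
    have := (ha.cesaro).comp hmtop
    exact this.congr fun n => by rw [Function.comp, inv_mul_eq_div]
  have hSlogn : Tendsto (fun n : ℕ => S (m n) / Real.log n) atTop (nhds c) := by
    have := hSm.mul hlogm
    rw [mul_one] at this
    apply this.congr'
    filter_upwards [(hmtop.eventually_ge_atTop 3)] with n hn
    have hmpos : (0:ℝ) < Real.log (m n) := by
      apply Real.log_pos; exact_mod_cast lt_of_lt_of_le (by norm_num) hn
    field_simp
  -- eventual positivity facts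
  have hfacts : ∀ᶠ n : ℕ in atTop, (0:ℝ) < Real.log n ∧ (0:ℝ) < (n:ℝ)
      ∧ (0:ℝ) < (m n : ℝ) ∧ (0:ℝ) < Real.log (m n) := by
    filter_upwards [hlog1, eventually_ge_atTop 2, hmge] with n h1 h2 h3
    have hn2 : (2:ℕ) ≤ m n := le_trans h2 h3
    refine ⟨lt_of_lt_of_le one_pos h1, by exact_mod_cast lt_of_lt_of_le (by norm_num) h2,
      by exact_mod_cast lt_of_lt_of_le (by norm_num) hn2, ?_⟩
    apply Real.log_pos; exact_mod_cast lt_of_lt_of_le (by norm_num) hn2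
  constructor
  · -- first moment
    have hsmall : Tendsto (fun n : ℕ => a (m n) * (c * Real.log n)⁻¹) atTop (nhds (c * 0)) := by
      refine ham.mul ?_
      exact (Tendsto.const_mul_atTop hc hLtop).inv_tendsto_atTop
    rw [mul_zero] at hsmall
    have hmain : Tendsto (fun n : ℕ => S (m n) / Real.log n * c⁻¹ - a (m n) * (c * Real.log n)⁻¹)
        atTop (nhds (c * c⁻¹ - 0)) := (hSlogn.mul tendsto_const_nhds).sub hsmall
    rw [mul_inv_cancel₀ hc.ne', sub_zero] at hmain
    apply hmain.congr'
    filter_upwards [hfacts] with n ⟨hL, hn, hm, hlm⟩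
    rw [hI1 n]
    have : (m n : ℝ) * p (m n) = a (m n) := rfl
    rw [this]
    field_simp
  · -- second moment
    have hmx' : Tendsto (fun n : ℕ => a (m n) * ((m n : ℝ) / ((n:ℝ) * Real.log n)) * c⁻¹)
        atTop (nhds (c * 1 * c⁻¹)) := (ham.mul hmx).mul tendsto_const_nhds
    have ht1 : Tendsto (fun n : ℕ =>
        2 * (A (m n) / (m n : ℝ)) * ((m n : ℝ) / ((n:ℝ) * Real.log n)) * c⁻¹)
        atTop (nhds (2 * c * 1 * c⁻¹)) :=
      (((tendsto_const_nhds.mul hAm).mul hmx).mul tendsto_const_nhds)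
    have ht2 : Tendsto (fun n : ℕ => S (m n) / Real.log n * ((c * n : ℝ))⁻¹)
        atTop (nhds (c * 0)) := by
      refine hSlogn.mul ?_
      exact (Tendsto.const_mul_atTop hc tendsto_natCast_atTop_atTop).inv_tendsto_atTop
    have hmain : Tendsto (fun n : ℕ =>
        2 * (A (m n) / (m n : ℝ)) * ((m n : ℝ) / ((n:ℝ) * Real.log n)) * c⁻¹
        + S (m n) / Real.log n * ((c * n : ℝ))⁻¹
        - a (m n) * ((m n : ℝ) / ((n:ℝ) * Real.log n)) * c⁻¹)
        atTop (nhds (2 * c * 1 * c⁻¹ + c * 0 - c * 1 * c⁻¹)) :=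
      (ht1.add ht2).sub hmx'
    have hval : 2 * c * 1 * c⁻¹ + c * 0 - c * 1 * c⁻¹ = 1 := by
      field_simp
      norm_num
    rw [hval] at hmain
    apply hmain.congr'
    filter_upwards [hfacts] with n ⟨hL, hn, hm, hlm⟩
    rw [hI2 n]
    field_simp
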